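/- If an earliest transiting occurrence h_i^e of a serial episode α is minimal and h_{i+1}^e exists, then h_i^e and h_{i+1}^e are non-interleaved, i.e., h_{i+1}^e(v_j) ≥ h_i^e(v_{j+1}) for all j = 1,...,N−1. -/

import Mathlib

variable {A : Type}

/-- An occurrence of the (N+1)-node serial episode `α` in the event sequence
`E` (of length `n`): a strictly increasing index map matching the event-types. -/
def IsOcc (E : ℕ → A) (n : ℕ) {N : ℕ} (α : Fin (N+1) → A) (h : Fin (N+1) → ℕ) : Prop :=
  StrictMono h ∧ (∀ i, h i < n) ∧ (∀ i, E (h i) = α i)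

/-- Earliest transiting occurrence: each `h i.succ` is the least index after
`h i.castSucc` carrying event-type `α i.succ`. -/
def IsET (E : ℕ → A) (n : ℕ) {N : ℕ} (α : Fin (N+1) → A) (h : Fin (N+1) → ℕ) : Prop :=
  IsOcc E n α h ∧ ∀ (i : Fin N) (j : ℕ), h i.castSucc < j → E j = α i.succ → h i.succ ≤ j

/-- Lexicographic order on occurrences. -/
def OccLex {N : ℕ} (h1 h2 : Fin (N+1) → ℕ) : Prop :=
  ∃ i, (∀ k < i, h1 k = h2 k) ∧ h1 i < h2 i

/-- The window `[a, b]` contains an occurrence of `α`. -/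
def WindowHasOcc (E : ℕ → A) (n : ℕ) {N : ℕ} (α : Fin (N+1) → A) (a b : ℕ) : Prop :=
  ∃ h, IsOcc E n α h ∧ a ≤ h 0 ∧ h (Fin.last N) ≤ b

/-- `[a, b]` is a minimal window of `α`: it contains an occurrence and no
proper subwindow contains one. -/
def IsMinWindow (E : ℕ → A) (n : ℕ) {N : ℕ} (α : Fin (N+1) → A) (a b : ℕ) : Prop :=
  WindowHasOcc E n α a b ∧
    ∀ c d, a ≤ c → d ≤ b → (a < c ∨ d < b) → ¬ WindowHasOcc E n α c d

/-- A minimal occurrence: its window is a minimal window. -/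
def IsMinOcc (E : ℕ → A) (n : ℕ) {N : ℕ} (α : Fin (N+1) → A) (h : Fin (N+1) → ℕ) : Prop :=
  IsOcc E n α h ∧ IsMinWindow E n α (h 0) (h (Fin.last N))

/-- `h'` is the earliest transiting occurrence immediately following `h`
in the lexicographic enumeration of earliest transiting occurrences. -/
def NextET (E : ℕ → A) (n : ℕ) {N : ℕ} (α : Fin (N+1) → A) (h h' : Fin (N+1) → ℕ) : Prop :=
  IsET E n α h ∧ IsET E n α h' ∧ OccLex h h' ∧
    ¬ ∃ g, IsET E n α g ∧ OccLex h g ∧ OccLex g h'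

/-- `h1 <⋆ h2` are non-interleaved: `h2 (v_j) ≥ h1 (v_{j+1})` for all `j < N`. -/
def NonInterleaved {N : ℕ} (h1 h2 : Fin (N+1) → ℕ) : Prop :=
  ∀ i : Fin N, h1 i.succ ≤ h2 i.castSucc

/-- Non-overlapped occurrences: one ends strictly before the other begins. -/
def NonOverlapped {N : ℕ} (h1 h2 : Fin (N+1) → ℕ) : Prop :=
  h1 (Fin.last N) < h2 0 ∨ h2 (Fin.last N) < h1 0

theorem stmt4 (E : ℕ → A) (n : ℕ) {N : ℕ} (α : Fin (N+1) → A)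
    (h h' : Fin (N+1) → ℕ) (hmin : IsMinOcc E n α h)
    (hnext : NextET E n α h h') : NonInterleaved h h' := by
  intro j
  by_contra hcon
  push_neg at hcon
  obtain ⟨hET, hET', hlex, -⟩ := hnext
  obtain ⟨hocc, hwin⟩ := hmin
  have h0lt : h 0 < h' 0 := by
    obtain ⟨i0, hk, hlt⟩ := hlex
    rcases eq_or_ne i0 0 with rfl | hne
    · exact hlt
    · obtain ⟨i1, rfl⟩ := Fin.eq_succ_of_ne_zero hne
      have heq : h i1.castSucc = h' i1.castSucc := hk _ (Fin.castSucc_lt_succ (i := i1))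
      have hle : h' i1.succ ≤ h i1.succ := by
        refine hET'.2 i1 (h i1.succ) ?_ (hET.1.2.2 _)
        rw [← heq]
        exact hET.1.1 (Fin.castSucc_lt_succ (i := i1))
      exact absurd hlt (not_lt.mpr hle)
  set g : Fin (N+1) → ℕ := fun k => if k ≤ j.castSucc then h' k else h k with hg
  have gocc : IsOcc E n α g := by
    refine ⟨?_, ?_, ?_⟩
    · intro a b hab
      simp only [hg]
      split_ifs with ha hb hb
      · exact hET'.1.1 hab
      · calc h' a ≤ h' j.castSucc := hET'.1.1.monotone ha
          _ < h j.succ := hcon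
          _ ≤ h b := hET.1.1.monotone (Fin.castSucc_lt_iff_succ_le.mp (not_le.mp hb))
      · exact absurd (hab.le.trans hb) ha
      · exact hET.1.1 hab
    · intro k
      simp only [hg]
      split_ifs
      · exact hET'.1.2.1 k
      · exact hET.1.2.1 k
    · intro k
      simp only [hg]
      split_ifs
      · exact hET'.1.2.2 k
      · exact hET.1.2.2 k
  have gl : g (Fin.last N) = h (Fin.last N) := by
    simp only [hg]
    exact if_neg (not_le.mpr (Fin.castSucc_lt_last j))
  have g0 : g 0 = h' 0 := by
    simp only [hg]
    exact if_pos (Fin.zero_le _)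
  exact hwin.2 (h' 0) (h (Fin.last N)) h0lt.le le_rfl (Or.inl h0lt)
    ⟨g, gocc, g0.ge, gl.le⟩
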